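/- arXiv:2004.01755 — 2 statements merged into one kernel-verified Lean document; each statement's English description precedes it below -/
import Mathlib

section
/- Let Γ be a connected μ-uniform graph with Cheeger constant h(Γ) > 0, and let η : [0,ℓ] → Γ be a geodesic with ℓ ∈ ℤ⁺. Suppose t ∈ ℤ⁺ with D < t ≤ ℓ, where D ∈ ℕ, and suppose A is a finite set of vertices containing the vertices η(0), η(1), ..., η(t−D−1) whose boundary ∂A is contained in the sphere S(η(t), D). Then t ≤ D + h(Γ)⁻¹ μ^D. -/
open Filter

/-- The vertex boundary of a finite set of vertices `A`: the vertices at graph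
distance exactly 1 from `A`, i.e. outside `A` but adjacent to a vertex of `A`. -/
def vertexBoundary {V : Type*} (G : SimpleGraph V) (A : Finset V) : Set V :=
  {v | v ∉ A ∧ ∃ a ∈ A, G.Adj v a}

/-- The combinatorial Cheeger isoperimetric constant `h(Γ) = inf_A |∂A|/|A|`,
where `A` ranges over all non-empty finite sets of vertices. -/
noncomputable def cheegerConst {V : Type*} (G : SimpleGraph V) : ℝ :=
  sInf { r : ℝ | ∃ A : Finset V, A.Nonempty ∧
    r = ((vertexBoundary G A).ncard : ℝ) / (A.card : ℝ) }

/-- A graph is `μ`-uniform if every vertex has at most `μ` neighbors. -/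
def UniformGraph {V : Type*} (G : SimpleGraph V) (μ : ℕ) : Prop :=
  ∀ v : V, (G.neighborSet v).Finite ∧ (G.neighborSet v).ncard ≤ μ

lemma sphere_bound {V : Type*} (G : SimpleGraph V) (hconn : G.Connected)
    (μ : ℕ) (hμ : UniformGraph G μ) (v : V) :
    ∀ D : ℕ, ∃ S : Finset V, {w : V | G.dist v w = D} = ↑S ∧ S.card ≤ μ ^ D := by
  classical
  intro D
  induction D with
  | zero =>
    refine ⟨{v}, ?_, by simp⟩
    ext w
    simp [hconn.dist_eq_zero_iff, eq_comm]
  | succ D ih =>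
    obtain ⟨S, hS, hcard⟩ := ih
    set T : Finset V := S.biUnion (fun u => (hμ u).1.toFinset) with hT
    refine ⟨T.filter (fun w => G.dist v w = D + 1), ?_, ?_⟩
    · ext w
      simp only [Finset.coe_filter, Set.mem_setOf_eq, Finset.mem_coe]
      constructor
      · intro hw
        refine ⟨?_, hw⟩
        obtain ⟨p, hp⟩ := (hconn v w).exists_walk_length_eq_dist
        cases hq : p.reverse with
        | nil =>
          exfalso
          have h0 : p.length = 0 := by
            have := congrArg SimpleGraph.Walk.length hq
            simpa using this
          omega
        | @cons _ u _ h q =>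
          have hlen : q.length = D := by
            have := congrArg SimpleGraph.Walk.length hq
            simp [hp, hw] at this
            omega
          have hdu : G.dist v u = D := by
            have h1 : G.dist v u ≤ D := by
              have := G.dist_le q.reverse
              simpa [hlen] using this
            have h2 : G.dist v w ≤ G.dist v u + G.dist u w :=
              hconn.dist_triangle
            have h3 : G.dist u w ≤ 1 := G.dist_le (SimpleGraph.Walk.cons h.symm .nil) |>.trans (by simp)
            omega
          refine Finset.mem_biUnion.mpr ⟨u, ?_, ?_⟩
          · rw [← Finset.mem_coe, ← hS]; exact hdu
          · simp [Set.Finite.mem_toFinset, SimpleGraph.mem_neighborSet]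
            exact h.symm
      · exact fun hw => hw.2

    · calc (T.filter _).card ≤ T.card := Finset.card_filter_le _ _
        _ ≤ ∑ u ∈ S, ((hμ u).1.toFinset).card := Finset.card_biUnion_le
        _ ≤ ∑ u ∈ S, μ := by
            refine Finset.sum_le_sum fun u _ => ?_
            have := (hμ u).2
            rwa [Set.ncard_eq_toFinset_card _ (hμ u).1] at this
        _ = S.card * μ := by simp [Finset.sum_const, mul_comm]
        _ ≤ μ ^ D * μ := by exact Nat.mul_le_mul_right μ hcard
        _ = μ ^ (D+1) := by ring

/-- Key counting step: if `η` is a geodesic (its integer points are vertices at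
mutual graph distance `|i - j|`), `D < t ≤ ℓ`, and `A` is a finite vertex set
containing `η(0), …, η(t-D-1)` whose boundary is contained in the sphere
`S(η(t), D)`, then `t ≤ D + h(Γ)⁻¹ μ^D`. -/
theorem geodesic_length_bound {V : Type*} (G : SimpleGraph V) (hconn : G.Connected)
    (μ : ℕ) (hμ : UniformGraph G μ) (hh : 0 < cheegerConst G)
    (ℓ t D : ℕ) (η : ℕ → V)
    (hgeo : ∀ i j, i ≤ ℓ → j ≤ ℓ → G.dist (η i) (η j) = max i j - min i j)
    (ht0 : 0 < t) (hDt : D < t) (htℓ : t ≤ ℓ)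
    (A : Finset V) (hAgeo : ∀ i, i ≤ t - D - 1 → η i ∈ A)
    (hbdry : vertexBoundary G A ⊆ {w : V | G.dist (η t) w = D}) :
    (t : ℝ) ≤ (D : ℝ) + (cheegerConst G)⁻¹ * (μ : ℝ) ^ D := by
  classical
  set c : ℕ := t - D with hc
  have hc1 : 1 ≤ c := by omega
  -- lower bound on |A|
  have hinj : Set.InjOn η ↑(Finset.range c) := by
    intro i hi j hj hij
    simp only [Finset.coe_range, Set.mem_Iio] at hi hj
    have := hgeo i j (by omega) (by omega)
    rw [hij, SimpleGraph.dist_self] at this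
    rcases le_total i j with h | h
    · simp [max_eq_right h, min_eq_left h] at this; omega
    · simp [max_eq_left h, min_eq_right h] at this; omega
  have hcA : c ≤ A.card := by
    have hsub : (Finset.range c).image η ⊆ A := by
      intro x hx
      obtain ⟨i, hi, rfl⟩ := Finset.mem_image.mp hx
      exact hAgeo i (by simp at hi; omega)
    calc c = ((Finset.range c).image η).card := by
            rw [Finset.card_image_of_injOn hinj, Finset.card_range]
      _ ≤ A.card := Finset.card_le_card hsub
  have hAne : A.Nonempty := ⟨η 0, hAgeo 0 (by omega)⟩
  -- boundary bound
  obtain ⟨S, hS, hScard⟩ := sphere_bound G hconn μ hμ (η t) D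
  have hbfin : (vertexBoundary G A).Finite := by
    apply Set.Finite.subset (S.finite_toSet)
    rw [← hS]; exact hbdry
  have hbcard : (vertexBoundary G A).ncard ≤ μ ^ D := by
    have h1 : (vertexBoundary G A).ncard ≤ (↑S : Set V).ncard := by
      apply Set.ncard_le_ncard _ S.finite_toSet
      rw [← hS]; exact hbdry
    rw [Set.ncard_coe_finset] at h1
    exact h1.trans hScard
  -- Cheeger inequality
  have hmem : ((vertexBoundary G A).ncard : ℝ) / (A.card : ℝ) ∈
      { r : ℝ | ∃ B : Finset V, B.Nonempty ∧
        r = ((vertexBoundary G B).ncard : ℝ) / (B.card : ℝ) } := ⟨A, hAne, rfl⟩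
  have hbdd : BddBelow { r : ℝ | ∃ B : Finset V, B.Nonempty ∧
      r = ((vertexBoundary G B).ncard : ℝ) / (B.card : ℝ) } := by
    refine ⟨0, fun r hr => ?_⟩
    obtain ⟨B, _, rfl⟩ := hr
    positivity
  have hch : cheegerConst G ≤ ((vertexBoundary G A).ncard : ℝ) / (A.card : ℝ) :=
    csInf_le hbdd hmem
  have hApos : (0 : ℝ) < (A.card : ℝ) := by
    exact_mod_cast Nat.lt_of_lt_of_le (by omega) hcA
  have key : (A.card : ℝ) ≤ (cheegerConst G)⁻¹ * (μ : ℝ) ^ D := by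
    rw [le_div_iff₀ hApos] at hch
    have h2 : cheegerConst G * (A.card : ℝ) ≤ (μ : ℝ) ^ D := by
      refine hch.trans ?_
      exact_mod_cast hbcard
    calc (A.card : ℝ) = (cheegerConst G)⁻¹ * (cheegerConst G * (A.card : ℝ)) := by
          field_simp
      _ ≤ (cheegerConst G)⁻¹ * (μ : ℝ) ^ D := by
          exact mul_le_mul_of_nonneg_left h2 (by positivity)
  have hcast : (c : ℝ) = (t : ℝ) - (D : ℝ) := by
    rw [hc]; push_cast [Nat.cast_sub hDt.le]; ring
  have : (c : ℝ) ≤ (A.card : ℝ) := by exact_mod_cast hcA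
  linarith
end

section
/- Suppose X and Y are proper hyperbolic geodesic spaces and f : X → Y is a quasi-isometry. If X has a pole in a point v, then Y has a pole in f(v). -/
open Filter Metric

/-- The Gromov product with respect to base point `o`. -/
noncomputable def gromovProd {X : Type*} [MetricSpace X] (o x y : X) : ℝ :=
  (dist x o + dist y o - dist x y) / 2

/-- A metric space is Gromov hyperbolic if the Gromov products satisfy the
`δ`-inequality for some `δ ≥ 0`. -/
def GromovHyperbolic (X : Type*) [MetricSpace X] : Prop :=
  ∃ δ : ℝ, 0 ≤ δ ∧ ∀ o x y z : X,
    min (gromovProd o x z) (gromovProd o z y) - δ ≤ gromovProd o x y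

/-- A geodesic ray: an isometric embedding of `[0, ∞)`. -/
def IsGeodesicRay {X : Type*} [MetricSpace X] (γ : ℝ → X) : Prop :=
  ∀ s t : ℝ, 0 ≤ s → 0 ≤ t → dist (γ s) (γ t) = |s - t|

/-- `X` has a pole in `v`: there is `M > 0` such that each point of `X` lies in the
`M`-neighborhood of some geodesic ray emanating from `v`. -/
def HasPoleAt {X : Type*} [MetricSpace X] (v : X) : Prop :=
  ∃ M : ℝ, 0 < M ∧ ∀ x : X, ∃ γ : ℝ → X,
    IsGeodesicRay γ ∧ γ 0 = v ∧ ∃ t : ℝ, 0 ≤ t ∧ dist x (γ t) ≤ M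

/-- A geodesic segment from `x` to `y`, parametrized by arc length on `[0, d(x,y)]`. -/
def IsGeodesicSegment {X : Type*} [MetricSpace X] (γ : ℝ → X) (x y : X) : Prop :=
  γ 0 = x ∧ γ (dist x y) = y ∧
    ∀ s ∈ Set.Icc (0 : ℝ) (dist x y), ∀ t ∈ Set.Icc (0 : ℝ) (dist x y),
      dist (γ s) (γ t) = |s - t|

/-- A geodesic metric space: every pair of points is joined by a geodesic. -/
def GeodesicSpace (X : Type*) [MetricSpace X] : Prop :=
  ∀ x y : X, ∃ γ : ℝ → X, IsGeodesicSegment γ x y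

/-- `f` is an `(α, β)`-quasi-isometric embedding. -/
def QuasiIsometricEmbedding {X Y : Type*} [MetricSpace X] [MetricSpace Y]
    (f : X → Y) (α β : ℝ) : Prop :=
  1 ≤ α ∧ 0 ≤ β ∧ ∀ x y : X,
    α⁻¹ * dist x y - β ≤ dist (f x) (f y) ∧ dist (f x) (f y) ≤ α * dist x y + β

/-- `f` is `ε`-full. -/
def IsFull {X Y : Type*} [MetricSpace X] [MetricSpace Y] (f : X → Y) (ε : ℝ) : Prop :=
  0 ≤ ε ∧ ∀ y : Y, ∃ x : X, dist (f x) y ≤ ε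

section Helpers

variable {Y : Type*} [MetricSpace Y]

lemma seg_dist_left {γ : ℝ → Y} {x y : Y} (hγ : IsGeodesicSegment γ x y)
    {u : ℝ} (hu : u ∈ Set.Icc (0:ℝ) (dist x y)) : dist x (γ u) = u := by
  have h := hγ.2.2 0 ⟨le_refl 0, dist_nonneg⟩ u hu
  rw [hγ.1] at h
  rw [h, abs_of_nonpos (by linarith [hu.1])]
  ring

lemma seg_dist_right {γ : ℝ → Y} {x y : Y} (hγ : IsGeodesicSegment γ x y)
    {u : ℝ} (hu : u ∈ Set.Icc (0:ℝ) (dist x y)) : dist (γ u) y = dist x y - u := by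
  have h := hγ.2.2 u hu (dist x y) ⟨dist_nonneg, le_refl _⟩
  rw [hγ.2.1] at h
  rw [h, abs_of_nonpos (by linarith [hu.2])]
  ring

lemma seg_rev {γ : ℝ → Y} {x y : Y} (hγ : IsGeodesicSegment γ x y) :
    IsGeodesicSegment (fun r => γ (dist x y - r)) y x := by
  have hd : dist y x = dist x y := dist_comm y x
  refine ⟨by simp [hγ.2.1], by rw [hd]; simp [hγ.1], ?_⟩
  intro s hs t ht
  rw [hd] at hs ht
  have := hγ.2.2 (dist x y - s) ⟨by linarith [hs.2], by linarith [hs.1]⟩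
    (dist x y - t) ⟨by linarith [ht.2], by linarith [ht.1]⟩
  rw [this]
  rw [abs_sub_comm]
  ring_nf

end Helpers
section Slim

variable {Y : Type*} [MetricSpace Y]

lemma slim_half {δ : ℝ} (hδ : 0 ≤ δ)
    (hyp : ∀ o x y z : Y, min (gromovProd o x z) (gromovProd o z y) - δ ≤ gromovProd o x y)
    {x y z : Y} {γ γ₁ : ℝ → Y} (hγ : IsGeodesicSegment γ x y)
    (h1 : IsGeodesicSegment γ₁ x z) {u : ℝ} (hu : u ∈ Set.Icc (0:ℝ) (dist x y))
    (hcase : u ≤ gromovProd x z y) :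
    u ∈ Set.Icc (0:ℝ) (dist x z) ∧ dist (γ u) (γ₁ u) ≤ 4 * δ := by
  have t1 : dist y x ≤ dist y z + dist z x := dist_triangle y z x
  have huz : u ∈ Set.Icc (0:ℝ) (dist x z) := by
    constructor
    · exact hu.1
    · have : gromovProd x z y ≤ dist x z := by
        simp only [gromovProd]
        linarith [dist_comm z x, dist_comm y x, dist_triangle x z y]
      linarith
  refine ⟨huz, ?_⟩
  set w := γ u with hw
  set w' := γ₁ u with hw'
  have dxw : dist x w = u := seg_dist_left hγ hu
  have dwy : dist w y = dist x y - u := seg_dist_right hγ hu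
  have dxw' : dist x w' = u := seg_dist_left h1 huz
  have dw'z : dist w' z = dist x z - u := seg_dist_right h1 huz
  have p1 : gromovProd x w y = u := by
    simp only [gromovProd]
    rw [dist_comm w x, dist_comm y x]
    rw [dxw, dwy]; ring
  have p2 : gromovProd x z w' = u := by
    simp only [gromovProd]
    rw [dist_comm w' x, dist_comm z w', dxw', dw'z, dist_comm z x]; ring
  have pzy : gromovProd x y z = gromovProd x z y := by
    simp only [gromovProd]
    rw [dist_comm y z]; ring
  have e1 := hyp x w z y
  rw [p1, pzy] at e1
  have e1' : u - δ ≤ gromovProd x w z := by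
    have : min u (gromovProd x z y) = u := min_eq_left hcase
    linarith [e1, this.ge.trans_eq rfl]
  have e2 := hyp x w w' z
  rw [p2] at e2
  have e2' : u - 2*δ ≤ gromovProd x w w' := by
    have hm : u - δ - δ ≤ gromovProd x w w' := by
      calc u - δ - δ ≤ min (gromovProd x w z) u - δ := by
            rcases min_cases (gromovProd x w z) u with ⟨h, _⟩ | ⟨h, _⟩ <;> rw [h] <;> linarith
        _ ≤ gromovProd x w w' := e2
    linarith
  have dfin : gromovProd x w w' = (u + u - dist w w') / 2 := by
    simp only [gromovProd]
    rw [dist_comm w x, dist_comm w' x, dxw, dxw']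
  rw [dfin] at e2'
  linarith

lemma slim {δ : ℝ} (hδ : 0 ≤ δ)
    (hyp : ∀ o x y z : Y, min (gromovProd o x z) (gromovProd o z y) - δ ≤ gromovProd o x y)
    {x y z : Y} {γ γ₁ γ₂ : ℝ → Y} (hγ : IsGeodesicSegment γ x y)
    (h1 : IsGeodesicSegment γ₁ x z) (h2 : IsGeodesicSegment γ₂ z y)
    {u : ℝ} (hu : u ∈ Set.Icc (0:ℝ) (dist x y)) :
    (∃ r ∈ Set.Icc (0:ℝ) (dist x z), dist (γ u) (γ₁ r) ≤ 4 * δ) ∨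
      (∃ r ∈ Set.Icc (0:ℝ) (dist z y), dist (γ u) (γ₂ r) ≤ 4 * δ) := by
  rcases le_or_gt u (gromovProd x z y) with hc | hc
  · obtain ⟨hr, hd⟩ := slim_half hδ hyp hγ h1 hu hc
    exact Or.inl ⟨u, hr, hd⟩
  · set u' := dist x y - u with hu'
    have hγr : IsGeodesicSegment (fun r => γ (dist x y - r)) y x := seg_rev hγ
    have hγ2r : IsGeodesicSegment (fun r => γ₂ (dist z y - r)) y z := seg_rev h2
    have hu'm : u' ∈ Set.Icc (0:ℝ) (dist y x) := by
      rw [dist_comm y x]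
      exact ⟨by simp [hu'] ; linarith [hu.2], by simp [hu']; linarith [hu.1]⟩
    have hcase' : u' ≤ gromovProd y z x := by
      simp only [gromovProd] at hc ⊢
      simp only [hu']
      linarith [dist_comm z x, dist_comm y x, dist_comm z y]
    obtain ⟨hr, hd⟩ := slim_half hδ hyp hγr hγ2r hu'm hcase'
    refine Or.inr ⟨dist z y - u', ?_, ?_⟩
    · rw [dist_comm y z] at hr
      exact ⟨by linarith [hr.2], by linarith [hr.1]⟩
    · have harg : dist x y - u' = u := by simp [hu']
      simpa [harg] using hd
end Slim
section ChainA

variable {Y : Type*} [MetricSpace Y]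

lemma chainA {δ : ℝ} (hδ : 0 ≤ δ)
    (hyp : ∀ o x y z : Y, min (gromovProd o x z) (gromovProd o z y) - δ ≤ gromovProd o x y)
    (hgeo : GeodesicSpace Y) (h : ℝ) (hh : 0 ≤ h) :
    ∀ (k n : ℕ) (c : ℕ → Y), 1 ≤ n → n ≤ 2 ^ k →
      (∀ i, i < n → dist (c i) (c (i + 1)) ≤ h) →
      ∀ γ : ℝ → Y, IsGeodesicSegment γ (c 0) (c n) →
      ∀ u ∈ Set.Icc (0:ℝ) (dist (c 0) (c n)),
      ∃ i ≤ n, dist (γ u) (c i) ≤ 4 * δ * k + h := by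
  intro k
  induction k with
  | zero =>
    intro n c hn1 hn2 hstep γ hγ u hu
    have hn : n = 1 := le_antisymm (by simpa using hn2) hn1
    subst hn
    refine ⟨0, by norm_num, ?_⟩
    have : dist (c 0) (γ u) = u := seg_dist_left hγ hu
    rw [dist_comm]
    rw [this]
    simp only [Nat.cast_zero, mul_zero, zero_add]
    exact le_trans hu.2 (hstep 0 one_pos)
  | succ k IH =>
    intro n c hn1 hn2 hstep γ hγ u hu
    rcases eq_or_lt_of_le hn1 with hn | hn
    · -- n = 1
      refine ⟨0, by omega, ?_⟩
      have h1 : dist (c 0) (γ u) = u := seg_dist_left hγ hu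
      rw [dist_comm, h1]
      have : u ≤ h := by
        refine le_trans hu.2 ?_
        rw [← hn]
        exact hstep 0 (by omega)
      have hk : (0:ℝ) ≤ 4 * δ * (k+1 : ℕ) := by positivity
      linarith
    · -- n ≥ 2
      set m := (n + 1) / 2 with hm
      have h2k : n ≤ 2 * 2 ^ k := by
        rw [pow_succ] at hn2; omega
      have hm1 : 1 ≤ m := by omega
      have hmk : m ≤ 2 ^ k := by
        have : 1 ≤ 2 ^ k := Nat.one_le_two_pow
        omega
      have hnm1 : 1 ≤ n - m := by omega
      have hnmk : n - m ≤ 2 ^ k := by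
        have : 1 ≤ 2 ^ k := Nat.one_le_two_pow
        omega
      have hmn : m ≤ n := by omega
      obtain ⟨γ₁, hγ₁⟩ := hgeo (c 0) (c m)
      obtain ⟨γ₂, hγ₂⟩ := hgeo (c m) (c n)
      rcases slim hδ hyp hγ hγ₁ hγ₂ hu with ⟨r, hr, hd⟩ | ⟨r, hr, hd⟩
      · obtain ⟨i, hi, hdi⟩ := IH m c hm1 hmk (fun i hi => hstep i (by omega)) γ₁ hγ₁ r hr
        refine ⟨i, by omega, ?_⟩
        have := dist_triangle (γ u) (γ₁ r) (c i)
        push_cast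
        push_cast at hdi
        linarith
      · obtain ⟨i, hi, hdi⟩ := IH (n - m) (fun j => c (m + j)) hnm1 hnmk
          (fun i hi => by
            show dist (c (m + i)) (c (m + (i + 1))) ≤ h
            have heq : m + (i + 1) = m + i + 1 := by omega
            rw [heq]
            exact hstep (m + i) (by omega))
          γ₂ (by simpa [Nat.add_sub_cancel' hmn] using hγ₂) r
          (by simpa [Nat.add_sub_cancel' hmn] using hr)
        refine ⟨m + i, by omega, ?_⟩
        have := dist_triangle (γ u) (γ₂ r) (c (m + i))
        push_cast
        push_cast at hdi
        linarith

end ChainA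
section Numeric

lemma sq_le_two_pow_pred : ∀ k : ℕ, 7 ≤ k → k ^ 2 ≤ 2 ^ (k - 1) := by
  intro k
  induction k with
  | zero => omega
  | succ k IH =>
    intro hk
    rcases Nat.lt_or_ge k 7 with h7 | h7
    · interval_cases k <;> simp_all <;> omega
    · have h1 := IH h7
      have hk1 : k - 1 + 1 = k := by omega
      have h2 : 2 ^ (k + 1 - 1) = 2 * 2 ^ (k - 1) := by
        rw [Nat.add_sub_cancel]
        conv_lhs => rw [← hk1]
        rw [pow_succ]; ring
      have h3 : (k + 1) ^ 2 ≤ 2 * k ^ 2 := by nlinarith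
      calc (k + 1) ^ 2 ≤ 2 * k ^ 2 := h3
        _ ≤ 2 * 2 ^ (k - 1) := by omega
        _ = 2 ^ (k + 1 - 1) := h2.symm

lemma exists_k0 (A' B' : ℝ) (hA : 0 ≤ A') (hB : 0 ≤ B') :
    ∃ k₀ : ℕ, 1 ≤ k₀ ∧ ∀ k : ℕ, k₀ ≤ k → A' * k + B' ≤ (2:ℝ) ^ (k - 1 : ℕ) := by
  refine ⟨max 7 (⌈A' + B'⌉₊ + 1), by omega, fun k hk => ?_⟩
  have hk7 : 7 ≤ k := le_trans (le_max_left _ _) hk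
  have hkAB : A' + B' ≤ (k:ℝ) := by
    have h1 : ⌈A' + B'⌉₊ + 1 ≤ k := le_trans (le_max_right _ _) hk
    have h2 : A' + B' ≤ (⌈A' + B'⌉₊ : ℝ) := Nat.le_ceil _
    have h3 : ((⌈A' + B'⌉₊ : ℕ) : ℝ) ≤ (k:ℝ) := by exact_mod_cast by omega
    linarith
  have hk1 : (1:ℝ) ≤ (k:ℝ) := by exact_mod_cast by omega
  have step1 : A' * k + B' ≤ (A' + B') * k := by nlinarith
  have step2 : (A' + B') * k ≤ (k:ℝ) ^ 2 := by nlinarith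
  have step3 : ((k:ℝ)) ^ 2 ≤ (2:ℝ) ^ (k - 1 : ℕ) := by
    have := sq_le_two_pow_pred k hk7
    exact_mod_cast this
  linarith

end Numeric
section Morse

variable {Y : Type*} [MetricSpace Y]

lemma min_lip (a b c : ℝ) : |min a c - min b c| ≤ |a - b| := by
  have := abs_min_sub_min_le_max a c b c
  simpa using this

set_option maxHeartbeats 2000000 in
lemma morse {δ α β : ℝ} (hδ : 0 ≤ δ) (hα : 1 ≤ α) (hβ : 0 ≤ β)
    (hyp : ∀ o x y z : Y, min (gromovProd o x z) (gromovProd o z y) - δ ≤ gromovProd o x y)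
    (hgeo : GeodesicSpace Y) :
    ∃ D₀ : ℝ, 1 ≤ D₀ ∧ ∀ (n : ℕ) (q : ℕ → Y),
      (∀ i j : ℕ, i ≤ n → j ≤ n →
        α⁻¹ * |(i:ℝ) - (j:ℝ)| - β ≤ dist (q i) (q j) ∧
        dist (q i) (q j) ≤ α * |(i:ℝ) - (j:ℝ)| + β) →
      ∀ σ : ℝ → Y, IsGeodesicSegment σ (q 0) (q n) →
      ∀ u ∈ Set.Icc (0:ℝ) (dist (q 0) (q n)), ∃ i ≤ n, dist (σ u) (q i) ≤ D₀ := by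
  have hαpos : (0:ℝ) < α := by linarith
  set h₀ : ℝ := α + β with hh₀
  have hh₀1 : (1:ℝ) ≤ h₀ := by simp [hh₀]; linarith
  set A : ℝ := 6 * α + 2 with hA
  set B2 : ℝ := A + α * β + 2 with hB2
  set A' : ℝ := 4 * δ * A with hA'
  set B' : ℝ := A * h₀ + B2 with hB'
  have hApos : 0 < A := by simp [hA]; linarith
  have hB2pos : 0 < B2 := by simp [hB2, hA]; nlinarith
  obtain ⟨k₀, hk₀1, hk₀⟩ := exists_k0 A' B' (by positivity) (by positivity)
  refine ⟨4 * δ * k₀ + h₀ + 1, by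
    have h4 : (0:ℝ) ≤ 4 * δ * k₀ := by positivity
    linarith, ?_⟩
  intro n q hq σ hσ
  set L : ℝ := dist (q 0) (q n) with hLdef
  have hL : 0 ≤ L := dist_nonneg
  have hne : (Finset.range (n+1)).Nonempty := ⟨0, by simp⟩
  set F : ℝ → ℝ := fun u => (Finset.range (n+1)).inf' hne (fun i => dist (σ u) (q i)) with hFdef
  have hFle_i : ∀ u : ℝ, ∀ i ≤ n, F u ≤ dist (σ u) (q i) := by
    intro u i hi
    exact Finset.inf'_le _ (Finset.mem_range.mpr (by omega))
  have hFattain : ∀ u : ℝ, ∃ i ≤ n, F u = dist (σ u) (q i) := by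
    intro u
    obtain ⟨i, hi, he⟩ := Finset.exists_mem_eq_inf' hne (fun i => dist (σ u) (q i))
    exact ⟨i, Nat.lt_succ_iff.mp (Finset.mem_range.mp hi), he⟩
  have hF0 : ∀ u : ℝ, 0 ≤ F u := by
    intro u
    obtain ⟨i, _, he⟩ := hFattain u
    rw [he]; exact dist_nonneg
  set S : Set ℝ := F '' Set.Icc 0 L with hSdef
  have hSne : S.Nonempty := ⟨F 0, 0, ⟨le_refl _, hL⟩, rfl⟩
  have hSbdd : BddAbove S := by
    refine ⟨L, fun z hz => ?_⟩
    obtain ⟨u, hu, rfl⟩ := hz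
    calc F u ≤ dist (σ u) (q 0) := hFle_i u 0 (by omega)
      _ = u := by rw [dist_comm]; exact seg_dist_left hσ hu
      _ ≤ L := hu.2
  set D : ℝ := sSup S with hDdef
  have hDF : ∀ u ∈ Set.Icc (0:ℝ) L, F u ≤ D := fun u hu => le_csSup hSbdd ⟨u, hu, rfl⟩
  have hD0 : 0 ≤ D := le_trans (hF0 0) (hDF 0 ⟨le_refl _, hL⟩)
  suffices hDD : D ≤ 4 * δ * k₀ + h₀ + 1 by
    intro u hu
    obtain ⟨i, hi, he⟩ := hFattain u
    exact ⟨i, hi, by rw [← he]; exact le_trans (hDF u hu) hDD⟩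
  by_contra hDcon
  push_neg at hDcon
  have hD1 : 1 < D := by
    have h4 : (0:ℝ) ≤ 4 * δ * k₀ := by positivity
    linarith
  obtain ⟨z, ⟨u₀, hu₀, rfl⟩, hgt⟩ := exists_lt_of_lt_csSup hSne (show D - 1 < D by linarith)
  have hall : ∀ i ≤ n, D - 1 < dist (σ u₀) (q i) :=
    fun i hi => lt_of_lt_of_le hgt (hFle_i u₀ i hi)
  set um : ℝ := max 0 (u₀ - 2*D) with hum
  set up : ℝ := min L (u₀ + 2*D) with hup
  have humIcc : um ∈ Set.Icc (0:ℝ) L := ⟨le_max_left _ _, max_le hL (by linarith [hu₀.2])⟩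
  have hupIcc : up ∈ Set.Icc (0:ℝ) L := ⟨le_min hL (by linarith [hu₀.1]), min_le_left _ _⟩
  have humle : um ≤ u₀ := max_le hu₀.1 (by linarith)
  have hupge : u₀ ≤ up := le_min hu₀.2 (by linarith)
  have hsd : ∀ s ∈ Set.Icc (0:ℝ) L, ∀ t ∈ Set.Icc (0:ℝ) L, s ≤ t → dist (σ s) (σ t) = t - s := by
    intro s hs t ht hst
    rw [hσ.2.2 s hs t ht, abs_of_nonpos (by linarith)]; ring
  have hd4 : up - um ≤ 4 * D := by
    have h1 : u₀ - 2*D ≤ um := le_max_right _ _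
    have h2 : up ≤ u₀ + 2*D := min_le_right _ _
    linarith
  -- endpoints anchors
  have hA_side : ∃ a ≤ n, dist (σ um) (q a) ≤ D ∧
      ∀ p : Y, dist (σ um) p ≤ dist (σ um) (q a) → D - 1 ≤ dist (σ u₀) p := by
    rcases le_or_gt 0 (u₀ - 2*D) with hc | hc
    · have hueq : um = u₀ - 2*D := max_eq_right hc
      have hdist : dist (σ um) (σ u₀) = 2*D := by
        rw [hsd um humIcc u₀ hu₀ humle, hueq]; ring
      obtain ⟨a, han, hae⟩ := hFattain um
      refine ⟨a, han, by rw [← hae]; exact hDF um humIcc, ?_⟩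
      intro p hp
      have htr := dist_triangle (σ um) p (σ u₀)
      have hcm : dist p (σ u₀) = dist (σ u₀) p := dist_comm p (σ u₀)
      have hqa : dist (σ um) (q a) ≤ D := by rw [← hae]; exact hDF um humIcc
      linarith
    · have hueq : um = 0 := max_eq_left (by linarith)
      have h0 : σ um = q 0 := by rw [hueq]; exact hσ.1
      refine ⟨0, by omega, by rw [h0]; simpa using hD0, ?_⟩
      intro p hp
      rw [h0] at hp
      simp only [dist_self] at hp
      have hpq : p = q 0 := (dist_le_zero.mp hp).symm
      rw [hpq]
      exact (hall 0 (by omega)).le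
  have hB_side : ∃ b ≤ n, dist (σ up) (q b) ≤ D ∧
      ∀ p : Y, dist (σ up) p ≤ dist (σ up) (q b) → D - 1 ≤ dist (σ u₀) p := by
    rcases le_or_gt (u₀ + 2*D) L with hc | hc
    · have hueq : up = u₀ + 2*D := min_eq_right hc
      have hdist : dist (σ u₀) (σ up) = 2*D := by
        rw [hsd u₀ hu₀ up hupIcc hupge, hueq]; ring
      obtain ⟨b, hbn, hbe⟩ := hFattain up
      refine ⟨b, hbn, by rw [← hbe]; exact hDF up hupIcc, ?_⟩
      intro p hp
      have htr := dist_triangle (σ up) p (σ u₀)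
      have hcm : dist p (σ u₀) = dist (σ u₀) p := dist_comm p (σ u₀)
      have hcm2 : dist (σ up) (σ u₀) = dist (σ u₀) (σ up) := dist_comm _ _
      have hqb : dist (σ up) (q b) ≤ D := by rw [← hbe]; exact hDF up hupIcc
      linarith
    · have hueq : up = L := min_eq_left (by linarith)
      have h0 : σ up = q n := by rw [hueq]; exact hσ.2.1
      refine ⟨n, le_refl _, by rw [h0]; simpa using hD0, ?_⟩
      intro p hp
      rw [h0] at hp
      simp only [dist_self] at hp
      have hpq : p = q n := (dist_le_zero.mp hp).symm
      rw [hpq]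
      exact (hall n (le_refl _)).le
  obtain ⟨a, han, hda, hPa⟩ := hA_side
  obtain ⟨b, hbn, hdb, hPb⟩ := hB_side
  obtain ⟨g₁, hg₁⟩ := hgeo (σ um) (q a)
  obtain ⟨g₂, hg₂⟩ := hgeo (q b) (σ up)
  set d₁ : ℝ := dist (σ um) (q a) with hd₁
  set d₂ : ℝ := dist (q b) (σ up) with hd₂
  have hd₁0 : 0 ≤ d₁ := dist_nonneg
  have hd₂0 : 0 ≤ d₂ := dist_nonneg
  have hd₂D : d₂ ≤ D := by rw [hd₂, dist_comm]; exact hdb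
  set m₁ : ℕ := ⌈d₁⌉₊ with hm₁
  set m₂ : ℕ := ⌈d₂⌉₊ with hm₂
  set s₂ : ℕ := if a ≤ b then b - a else a - b with hs₂
  set pdx : ℕ → ℕ := fun t => if a ≤ b then a + t else a - t with hpdx
  have hpdx0 : pdx 0 = a := by simp [hpdx]
  have hpdxs : pdx s₂ = b := by
    rcases le_or_gt a b with h | h
    · simp only [hpdx, hs₂, if_pos h]; omega
    · have hnb : ¬ (a ≤ b) := by omega
      simp only [hpdx, hs₂, if_neg hnb]; omega
  have hpdxle : ∀ t ≤ s₂, pdx t ≤ n := by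
    intro t ht
    rcases le_or_gt a b with h | h
    · simp only [hs₂, if_pos h] at ht
      simp only [hpdx, if_pos h]; omega
    · have hnb : ¬ (a ≤ b) := by omega
      simp only [hpdx, if_neg hnb]; omega
  set c : ℕ → Y := fun j =>
    if j ≤ m₁ then g₁ (min (j:ℝ) d₁)
    else if j ≤ m₁ + s₂ then q (pdx (j - m₁))
    else g₂ (min ((j - m₁ - s₂ : ℕ) : ℝ) d₂) with hc
  set N : ℕ := m₁ + s₂ + m₂ with hN
  have hminc : ∀ j : ℕ, min (j:ℝ) d₁ ∈ Set.Icc (0:ℝ) d₁ :=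
    fun j => ⟨le_min (by positivity) hd₁0, min_le_right _ _⟩
  have hminc2 : ∀ j : ℕ, min (j:ℝ) d₂ ∈ Set.Icc (0:ℝ) d₂ :=
    fun j => ⟨le_min (by positivity) hd₂0, min_le_right _ _⟩
  have hm₁d : d₁ ≤ (m₁:ℝ) := Nat.le_ceil d₁
  have hm₂d : d₂ ≤ (m₂:ℝ) := Nat.le_ceil d₂
  have hc0 : c 0 = σ um := by
    simp only [hc, if_pos (Nat.zero_le m₁), Nat.cast_zero, min_eq_left hd₁0]
    exact hg₁.1
  have hcm₁ : c m₁ = q a := by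
    simp only [hc, if_pos (le_refl m₁), min_eq_right hm₁d]
    exact hg₁.2.1
  have hzone2 : ∀ t ≤ s₂, c (m₁ + t) = q (pdx t) := by
    intro t ht
    rcases Nat.eq_zero_or_pos t with rfl | htpos
    · rw [Nat.add_zero, hcm₁, hpdx0]
    · have h1 : ¬ (m₁ + t ≤ m₁) := by omega
      simp only [hc, if_neg h1, if_pos (by omega : m₁ + t ≤ m₁ + s₂), Nat.add_sub_cancel_left]
  have hcm₁s : c (m₁ + s₂) = q b := by rw [hzone2 s₂ (le_refl _), hpdxs]
  have hzone3 : ∀ t, 1 ≤ t → c (m₁ + s₂ + t) = g₂ (min (t:ℝ) d₂) := by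
    intro t ht
    have h1 : ¬ (m₁ + s₂ + t ≤ m₁) := by omega
    have h2 : ¬ (m₁ + s₂ + t ≤ m₁ + s₂) := by omega
    simp only [hc, if_neg h1, if_neg h2]
    have h3 : m₁ + s₂ + t - m₁ - s₂ = t := by omega
    rw [h3]
  have hcN : c N = σ up := by
    rcases Nat.eq_zero_or_pos m₂ with hz | hpos
    · have hd₂z : d₂ ≤ 0 := by rw [hz] at hm₂d; exact_mod_cast hm₂d
      have hqb : q b = σ up := dist_le_zero.mp hd₂z
      rw [hN, hz, Nat.add_zero, hcm₁s, hqb]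
    · rw [hN, hzone3 m₂ hpos, min_eq_right hm₂d]
      exact hg₂.2.1
  have hg₁iso : ∀ r ∈ Set.Icc (0:ℝ) d₁, ∀ r' ∈ Set.Icc (0:ℝ) d₁,
      dist (g₁ r) (g₁ r') = |r - r'| := hg₁.2.2
  have hg₂iso : ∀ r ∈ Set.Icc (0:ℝ) d₂, ∀ r' ∈ Set.Icc (0:ℝ) d₂,
      dist (g₂ r) (g₂ r') = |r - r'| := hg₂.2.2
  -- step bounds for the composite chain
  have hstep : ∀ j, j < N → dist (c j) (c (j+1)) ≤ h₀ := by
    intro j hj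
    by_cases h1 : j + 1 ≤ m₁
    · have hcj : c j = g₁ (min (j:ℝ) d₁) := by simp only [hc, if_pos (by omega : j ≤ m₁)]
      have hcj1 : c (j+1) = g₁ (min ((j+1:ℕ):ℝ) d₁) := by simp only [hc, if_pos h1]
      rw [hcj, hcj1, hg₁iso _ (hminc j) _ (hminc (j+1))]
      have := min_lip ((j:ℕ):ℝ) ((j+1:ℕ):ℝ) d₁
      have hc1 : |((j:ℕ):ℝ) - ((j+1:ℕ):ℝ)| = 1 := by
        push_cast; rw [abs_of_nonpos (by linarith)]; ring
      rw [hc1] at this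
      linarith
    · by_cases h2 : j + 1 ≤ m₁ + s₂
      · have hjm : m₁ ≤ j := by omega
        have hcj : c j = q (pdx (j - m₁)) := by
          have := hzone2 (j - m₁) (by omega)
          rwa [Nat.add_sub_cancel' hjm] at this
        have hcj1 : c (j+1) = q (pdx (j - m₁ + 1)) := by
          have := hzone2 (j - m₁ + 1) (by omega)
          have he : m₁ + (j - m₁ + 1) = j + 1 := by omega
          rwa [he] at this
        rw [hcj, hcj1]
        have hup1 := (hq (pdx (j - m₁)) (pdx (j - m₁ + 1))
          (hpdxle _ (by omega)) (hpdxle _ (by omega))).2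
        have hone : |((pdx (j - m₁) : ℕ):ℝ) - ((pdx (j - m₁ + 1) : ℕ):ℝ)| = 1 := by
          rcases le_or_gt a b with h | h
          · simp only [hpdx, if_pos h]
            push_cast
            rw [abs_of_nonpos (by push_cast; linarith)]
            push_cast; ring
          · have hnb : ¬ (a ≤ b) := by omega
            simp only [hpdx, if_neg hnb]
            simp only [hs₂, if_neg hnb] at h2
            have e1 : a - (j - m₁) = (a - (j - m₁ + 1)) + 1 := by omega
            rw [e1]
            push_cast
            rw [abs_of_nonneg (by linarith)]
            ring
        rw [hone] at hup1
        calc dist (q (pdx (j - m₁))) (q (pdx (j - m₁ + 1))) ≤ α * 1 + β := hup1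
          _ = h₀ := by rw [hh₀]; ring
      · by_cases h3 : j = m₁ + s₂
        · have hcj : c j = q b := by rw [h3, hcm₁s]
          have hcj1 : c (j+1) = g₂ (min ((1:ℕ):ℝ) d₂) := by
            have := hzone3 1 (le_refl 1)
            rw [h3]; exact this
          rw [hcj, hcj1]
          have : dist (q b) (g₂ (min ((1:ℕ):ℝ) d₂)) = min ((1:ℕ):ℝ) d₂ :=
            seg_dist_left hg₂ (hminc2 1)
          rw [this]
          calc min ((1:ℕ):ℝ) d₂ ≤ ((1:ℕ):ℝ) := min_le_left _ _
            _ ≤ h₀ := by push_cast; linarith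
        · have hjm : m₁ + s₂ + 1 ≤ j := by omega
          have he1 : m₁ + s₂ + (j - m₁ - s₂) = j := by omega
          have he2 : m₁ + s₂ + (j - m₁ - s₂ + 1) = j + 1 := by omega
          have hcj : c j = g₂ (min ((j - m₁ - s₂ : ℕ):ℝ) d₂) := by
            have := hzone3 (j - m₁ - s₂) (by omega)
            rwa [he1] at this
          have hcj1 : c (j+1) = g₂ (min ((j - m₁ - s₂ + 1 : ℕ):ℝ) d₂) := by
            have := hzone3 (j - m₁ - s₂ + 1) (by omega)
            rwa [he2] at this
          rw [hcj, hcj1, hg₂iso _ (hminc2 _) _ (hminc2 _)]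
          have := min_lip ((j - m₁ - s₂ : ℕ):ℝ) ((j - m₁ - s₂ + 1 : ℕ):ℝ) d₂
          have hc1 : |((j - m₁ - s₂ : ℕ):ℝ) - ((j - m₁ - s₂ + 1 : ℕ):ℝ)| = 1 := by
            push_cast; rw [abs_of_nonpos (by linarith)]; ring
          rw [hc1] at this
          linarith
  -- lower bound : every chain point is far from x₀ = σ u₀
  have hlow : ∀ j, j ≤ N → D - 1 ≤ dist (σ u₀) (c j) := by
    intro j hj
    by_cases h1 : j ≤ m₁
    · have hcj : c j = g₁ (min (j:ℝ) d₁) := by simp only [hc, if_pos h1]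
      rw [hcj]
      refine hPa _ ?_
      have : dist (σ um) (g₁ (min (j:ℝ) d₁)) = min (j:ℝ) d₁ := seg_dist_left hg₁ (hminc j)
      rw [this]
      exact min_le_right _ _
    · by_cases h2 : j ≤ m₁ + s₂
      · have hcj : c j = q (pdx (j - m₁)) := by
          have := hzone2 (j - m₁) (by omega)
          rwa [Nat.add_sub_cancel' (by omega : m₁ ≤ j)] at this
        rw [hcj]
        exact (hall _ (hpdxle _ (by omega))).le
      · have he1 : m₁ + s₂ + (j - m₁ - s₂) = j := by omega
        have hcj : c j = g₂ (min ((j - m₁ - s₂ : ℕ):ℝ) d₂) := by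
          have := hzone3 (j - m₁ - s₂) (by omega)
          rwa [he1] at this
        rw [hcj]
        refine hPb _ ?_
        have : dist (g₂ (min ((j - m₁ - s₂ : ℕ):ℝ) d₂)) (σ up)
            = d₂ - min ((j - m₁ - s₂ : ℕ):ℝ) d₂ := seg_dist_right hg₂ (hminc2 _)
        rw [dist_comm (σ up), this, dist_comm (σ up) (q b), ← hd₂]
        have := (hminc2 (j - m₁ - s₂)).1
        linarith
  -- the restricted geodesic
  have hdmm : dist (σ um) (σ up) = up - um := hsd um humIcc up hupIcc (le_trans humle hupge)
  have hσ' : IsGeodesicSegment (fun r => σ (um + r)) (c 0) (c N) := by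
    rw [hc0, hcN]
    refine ⟨by simp, ?_, ?_⟩
    · rw [hdmm]
      norm_num
    · intro s hs t ht
      rw [hdmm] at hs ht
      have h1 : um + s ∈ Set.Icc (0:ℝ) L :=
        ⟨by linarith [humIcc.1, hs.1], by linarith [hupIcc.2, hs.2]⟩
      have h2 : um + t ∈ Set.Icc (0:ℝ) L :=
        ⟨by linarith [humIcc.1, ht.1], by linarith [hupIcc.2, ht.2]⟩
      rw [hσ.2.2 _ h1 _ h2]
      congr 1
      ring
  have hx₀mem : u₀ - um ∈ Set.Icc (0:ℝ) (dist (c 0) (c N)) := by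
    rw [hc0, hcN, hdmm]
    exact ⟨by linarith, by linarith⟩
  -- case N = 0
  rcases Nat.eq_zero_or_pos N with hN0 | hNpos
  · have hm₁0 : m₁ = 0 := by omega
    have hs₂0 : s₂ = 0 := by omega
    have hd₁z : d₁ ≤ 0 := by
      have h0 : (m₁:ℝ) = 0 := by rw [hm₁0]; simp
      linarith [hm₁d]
    have hqa : σ um = q a := dist_le_zero.mp hd₁z
    have hab : a = b := by rw [← hpdxs, hs₂0, hpdx0]
    have h3 : σ up = q b := by rw [← hcN, hN0, hc0, hqa, hab]
    have hupum : up = um := by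
      have hz : dist (σ um) (σ up) = 0 := by rw [hqa, h3, hab]; simp
      rw [hdmm] at hz; linarith [le_trans humle hupge]
    have hu₀m : u₀ = um := by
      have := hupum ▸ hupge
      linarith [humle]
    have hzero : dist (σ u₀) (q a) = 0 := by rw [hu₀m, hqa]; simp
    have := hall a han
    linarith
  -- main case
  set k : ℕ := Nat.clog 2 N with hk
  obtain ⟨j, hjN, hdj⟩ := chainA hδ hyp hgeo h₀ (by linarith) k N c hNpos
    (Nat.le_pow_clog one_lt_two N) hstep _ hσ' (u₀ - um) hx₀mem
  have hx₀eq : σ (um + (u₀ - um)) = σ u₀ := by congr 1; ring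
  rw [hx₀eq] at hdj
  have hkey : D - 1 ≤ 4 * δ * k + h₀ := le_trans (hlow j hjN) (by linarith [hdj])
  -- bound on N
  have hs₂R : (s₂:ℝ) ≤ α * (6 * D + β) := by
    have hlow2 := (hq a b han hbn).1
    have habs : |(a:ℝ) - (b:ℝ)| = (s₂:ℝ) := by
      rcases le_or_gt a b with h | h
      · have h' : (a:ℝ) ≤ (b:ℝ) := by exact_mod_cast h
        rw [hs₂, if_pos h, abs_of_nonpos (by linarith)]
        push_cast [h]
        ring
      · have h' : (b:ℝ) ≤ (a:ℝ) := by exact_mod_cast h.le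
        have hnb : ¬ (a ≤ b) := by omega
        rw [hs₂, if_neg hnb, abs_of_nonneg (by linarith)]
        push_cast [h.le]
        ring
    have hdab : dist (q a) (q b) ≤ 6 * D := by
      have t1 := dist_triangle (q a) (σ um) (σ up)
      have t2 := dist_triangle (q a) (σ um) (q b)
      have t3 := dist_triangle (q a) (σ up) (q b)
      have e1 : dist (q a) (σ um) = d₁ := dist_comm (q a) (σ um) ▸ rfl
      have e2 : dist (σ up) (q b) = d₂ := dist_comm (σ up) (q b) ▸ rfl
      calc dist (q a) (q b) ≤ dist (q a) (σ um) + dist (σ um) (σ up) + dist (σ up) (q b) :=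
            dist_triangle4 _ _ _ _
        _ = d₁ + (up - um) + d₂ := by rw [e1, e2, hdmm]
        _ ≤ D + 4*D + D := by
            have hd₁D : d₁ ≤ D := hda
            linarith [hd4, hd₂D]
        _ = 6 * D := by ring
    rw [habs] at hlow2
    have : α⁻¹ * (s₂:ℝ) ≤ 6 * D + β := by linarith
    calc (s₂:ℝ) = α * (α⁻¹ * (s₂:ℝ)) := by field_simp
      _ ≤ α * (6 * D + β) := by
          apply mul_le_mul_of_nonneg_left this (le_of_lt hαpos)
  have hNR : (N:ℝ) ≤ A * (D - 1) + B2 := by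
    have hm₁R : (m₁:ℝ) ≤ D + 1 := by
      have h1 := Nat.ceil_lt_add_one hd₁0
      have hd₁D : d₁ ≤ D := hda
      have h2 : (m₁:ℝ) < d₁ + 1 := h1
      linarith
    have hm₂R : (m₂:ℝ) ≤ D + 1 := by
      have h1 := Nat.ceil_lt_add_one hd₂0
      have h2 : (m₂:ℝ) < d₂ + 1 := h1
      linarith [hd₂D]
    have hNcast : (N:ℝ) = (m₁:ℝ) + (s₂:ℝ) + (m₂:ℝ) := by rw [hN]; push_cast; ring
    rw [hNcast]
    have : (m₁:ℝ) + (s₂:ℝ) + (m₂:ℝ) ≤ (D+1) + α*(6*D+β) + (D+1) := by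
      linarith [hs₂R]
    calc (m₁:ℝ) + (s₂:ℝ) + (m₂:ℝ) ≤ (D+1) + α*(6*D+β) + (D+1) := this
      _ = (6*α+2)*(D-1) + ((6*α+2) + α*β + 2) := by ring
      _ = A * (D-1) + B2 := by rw [hA, hB2, hA]
  -- conclude via the exponential bound
  rcases lt_or_ge k k₀ with hkk | hkk
  · have hkR : (k:ℝ) ≤ (k₀:ℝ) - 1 := by
      have : k + 1 ≤ k₀ := hkk
      have := (Nat.cast_le (α := ℝ)).mpr this
      push_cast at this
      linarith
    have hmono : 4*δ*(k:ℝ) ≤ 4*δ*((k₀:ℝ) - 1) :=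
      mul_le_mul_of_nonneg_left hkR (by positivity)
    linarith [hkey, hδ]
  · -- k ≥ k₀ : contradiction
    have hN2 : 2 ≤ N := by
      by_contra hcon2
      push_neg at hcon2
      have : N ≤ 1 := by omega
      have : k = 0 := by rw [hk]; exact Nat.clog_of_right_le_one this 2
      omega
    have hpow := Nat.pow_pred_clog_lt_self one_lt_two (by omega : 1 < N)
    have hpowR : (2:ℝ) ^ (k - 1 : ℕ) < (N:ℝ) := by
      have := (Nat.cast_lt (α := ℝ)).mpr hpow
      rw [Nat.cast_pow] at this
      exact_mod_cast this
    have hk₀R := hk₀ k hkk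
    have hchain : (N:ℝ) ≤ A' * k + B' := by
      have h1 : A * (D - 1) + B2 ≤ A * (4*δ*k + h₀) + B2 := by
        have := mul_le_mul_of_nonneg_left hkey hApos.le
        linarith
      have h2 : A * (4*δ*k + h₀) + B2 = A' * k + B' := by rw [hA', hB']; ring
      linarith [hNR]
    linarith

end Morse
section ChainNear

variable {Y : Type*} [MetricSpace Y]

set_option maxHeartbeats 1000000 in
lemma chain_near {δ α β : ℝ} (hδ : 0 ≤ δ) (hα : 1 ≤ α) (hβ : 0 ≤ β)
    (hyp : ∀ o x y z : Y, min (gromovProd o x z) (gromovProd o z y) - δ ≤ gromovProd o x y)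
    (hgeo : GeodesicSpace Y) :
    ∃ D' : ℝ, 0 < D' ∧ ∀ (n : ℕ) (q : ℕ → Y),
      (∀ i j : ℕ, i ≤ n → j ≤ n →
        α⁻¹ * |(i:ℝ) - (j:ℝ)| - β ≤ dist (q i) (q j) ∧
        dist (q i) (q j) ≤ α * |(i:ℝ) - (j:ℝ)| + β) →
      ∀ σ : ℝ → Y, IsGeodesicSegment σ (q 0) (q n) →
      ∀ i ≤ n, ∃ u ∈ Set.Icc (0:ℝ) (dist (q 0) (q n)), dist (q i) (σ u) ≤ D' := by
  have hαpos : (0:ℝ) < α := by linarith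
  obtain ⟨D₀, hD₀1, hmorse⟩ := morse hδ hα hβ hyp hgeo
  set J : ℝ := α * (2*D₀ + 1 + β) with hJ
  have hJpos : 0 < J := by
    have : 0 < 2*D₀ + 1 + β := by linarith
    positivity
  refine ⟨α * J + β + D₀ + 1, by positivity, ?_⟩
  intro n q hq σ hσ i hi
  set L : ℝ := dist (q 0) (q n) with hL
  have hL0 : 0 ≤ L := dist_nonneg
  set m : ℕ := ⌈L⌉₊ with hm
  have hvIcc : ∀ j : ℕ, min (j:ℝ) L ∈ Set.Icc (0:ℝ) L :=
    fun j => ⟨le_min (by positivity) hL0, min_le_right _ _⟩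
  have hIex : ∀ j : ℕ, ∃ i' ≤ n, dist (σ (min (j:ℝ) L)) (q i') ≤ D₀ :=
    fun j => hmorse n q hq σ hσ _ (hvIcc j)
  choose I hIn hId using hIex
  -- distance between consecutive sigma points is ≤ 1
  have hsig1 : ∀ j : ℕ, dist (σ (min (j:ℝ) L)) (σ (min ((j+1:ℕ):ℝ) L)) ≤ 1 := by
    intro j
    rw [hσ.2.2 _ (hvIcc j) _ (hvIcc (j+1))]
    have h1 := min_lip ((j:ℕ):ℝ) ((j+1:ℕ):ℝ) L
    have h2 : |((j:ℕ):ℝ) - ((j+1:ℕ):ℝ)| = 1 := by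
      push_cast; rw [abs_of_nonpos (by linarith)]; ring
    rw [h2] at h1
    exact h1
  -- index jumps are at most J
  have hdistIdx : ∀ (i' j' : ℕ), i' ≤ n → j' ≤ n → dist (q i') (q j') ≤ 2*D₀ + 1 →
      |(i':ℝ) - (j':ℝ)| ≤ J := by
    intro i' j' hi' hj' hd
    have hlow := (hq i' j' hi' hj').1
    have h1 : α⁻¹ * |(i':ℝ) - (j':ℝ)| ≤ 2*D₀ + 1 + β := by linarith
    calc |(i':ℝ) - (j':ℝ)| = α * (α⁻¹ * |(i':ℝ) - (j':ℝ)|) := by field_simp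
      _ ≤ α * (2*D₀ + 1 + β) := mul_le_mul_of_nonneg_left h1 hαpos.le
      _ = J := hJ.symm
  have hstepI : ∀ j : ℕ, |(I (j+1):ℝ) - (I j:ℝ)| ≤ J := by
    intro j
    apply hdistIdx _ _ (hIn (j+1)) (hIn j)
    calc dist (q (I (j+1))) (q (I j))
        ≤ dist (q (I (j+1))) (σ (min ((j+1:ℕ):ℝ) L)) + dist (σ (min ((j+1:ℕ):ℝ) L)) (σ (min (j:ℝ) L))
          + dist (σ (min (j:ℝ) L)) (q (I j)) := dist_triangle4 _ _ _ _
      _ ≤ D₀ + 1 + D₀ := by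
          have e1 := hId (j+1)
          have e2 := hId j
          rw [dist_comm (q (I (j+1)))]
          rw [dist_comm (σ (min ((j+1:ℕ):ℝ) L)) (σ (min ((j:ℕ):ℝ) L))]
          linarith [hsig1 j]
      _ = 2*D₀ + 1 := by ring
  have hI0 : (I 0 : ℝ) ≤ J := by
    have h0 : min ((0:ℕ):ℝ) L = 0 := by simp [hL0]
    have := hId 0
    rw [h0, hσ.1] at this
    have habs := hdistIdx 0 (I 0) (by omega) (hIn 0) (by linarith [hD₀1])
    rw [abs_sub_comm] at habs
    calc (I 0 : ℝ) = |(I 0:ℝ) - (0:ℕ)| := by simp [abs_of_nonneg]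
      _ ≤ J := habs
  have hIm : (n:ℝ) - (I m : ℝ) ≤ J := by
    have hmL : min ((m:ℕ):ℝ) L = L := min_eq_right (Nat.le_ceil L)
    have := hId m
    rw [hmL, hσ.2.1] at this
    have habs := hdistIdx n (I m) (le_refl n) (hIn m) (by linarith [hD₀1])
    calc (n:ℝ) - (I m:ℝ) ≤ |(n:ℝ) - (I m:ℝ)| := le_abs_self _
      _ ≤ J := habs
  -- discrete intermediate value: find j with |I j - i| ≤ J
  have hSne : ∃ j, j ≤ m ∧ (i:ℝ) - J ≤ (I j : ℝ) := by
    refine ⟨m, le_refl m, ?_⟩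
    have : (i:ℝ) ≤ (n:ℝ) := by exact_mod_cast hi
    linarith
  set S : Set ℕ := {j | j ≤ m ∧ (i:ℝ) - J ≤ (I j : ℝ)} with hS
  have hSne' : S.Nonempty := hSne
  set j₀ : ℕ := sInf S with hj₀
  have hj₀mem : j₀ ∈ S := Nat.sInf_mem hSne'
  have hfound : |(I j₀ : ℝ) - (i:ℝ)| ≤ J := by
    rcases Nat.eq_zero_or_pos j₀ with hz | hpos
    · rw [abs_le]
      constructor
      · linarith [hj₀mem.2]
      · have : (I j₀ : ℝ) ≤ J := by rw [hz] at *; exact hI0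
        have hi0 : (0:ℝ) ≤ (i:ℝ) := by positivity
        linarith
    · have hjm1 : j₀ - 1 ∉ S := Nat.notMem_of_lt_sInf (by omega)
      have hjm1le : j₀ - 1 ≤ m := by have := hj₀mem.1; omega
      have hlt : (I (j₀ - 1) : ℝ) < (i:ℝ) - J := by
        by_contra hcc
        push_neg at hcc
        exact hjm1 ⟨hjm1le, hcc⟩
      have hstep' := hstepI (j₀ - 1)
      have hj1 : j₀ - 1 + 1 = j₀ := by omega
      rw [hj1] at hstep'
      rw [abs_le] at hstep' ⊢
      constructor
      · linarith [hj₀mem.2]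
      · linarith [hstep'.2]
  refine ⟨min (j₀:ℝ) L, hvIcc j₀, ?_⟩
  have hup := (hq i (I j₀) hi (hIn j₀)).2
  have habs2 : |(i:ℝ) - (I j₀:ℝ)| ≤ J := by rw [abs_sub_comm]; exact hfound
  calc dist (q i) (σ (min (j₀:ℝ) L))
      ≤ dist (q i) (q (I j₀)) + dist (q (I j₀)) (σ (min (j₀:ℝ) L)) := dist_triangle _ _ _
    _ ≤ (α * J + β) + D₀ := by
        have h1 : dist (q i) (q (I j₀)) ≤ α * J + β := by
          have := mul_le_mul_of_nonneg_left habs2 hαpos.le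
          linarith [hup]
        rw [dist_comm (q (I j₀))]
        linarith [hId j₀]
    _ ≤ α * J + β + D₀ + 1 := by linarith

end ChainNear
set_option maxHeartbeats 2000000 in
/-- A quasi-isometry between proper hyperbolic geodesic spaces maps a pole to a pole. -/
theorem pole_of_quasiIsometry {X Y : Type*} [MetricSpace X] [MetricSpace Y]
    [ProperSpace X] [ProperSpace Y]
    (hXgeo : GeodesicSpace X) (hYgeo : GeodesicSpace Y)
    (hXhyp : GromovHyperbolic X) (hYhyp : GromovHyperbolic Y)
    (f : X → Y) (α β ε : ℝ)
    (hf : QuasiIsometricEmbedding f α β) (hfull : IsFull f ε)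
    (v : X) (hv : HasPoleAt v) : HasPoleAt (f v) := by
  obtain ⟨δ, hδ0, hyp⟩ := hYhyp
  obtain ⟨hα, hβ, hfb⟩ := hf
  obtain ⟨hε0, hfullex⟩ := hfull
  obtain ⟨M, hMpos, hpole⟩ := hv
  obtain ⟨D', hD'pos, hnear⟩ := chain_near hδ0 hα hβ hyp hYgeo
  have hαpos : (0:ℝ) < α := by linarith
  set o : Y := f v with ho
  set M'' : ℝ := ε + α * (M + 1) + β + D' with hM''
  have hM''pos : 0 < M'' := by
    have h1 : 0 < α * (M + 1) := by positivity
    simp only [hM'']; linarith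
  refine ⟨M'' + 1, by linarith, ?_⟩
  intro y
  obtain ⟨x, hx⟩ := hfullex y
  obtain ⟨γ, hray, hγ0, t₀, ht₀, hxt⟩ := hpole x
  set q : ℕ → Y := fun i => f (γ (i:ℝ)) with hqdef
  have hq0 : q 0 = o := by
    show f (γ ((0:ℕ):ℝ)) = o
    rw [Nat.cast_zero, hγ0]
  have hqb : ∀ i j : ℕ, α⁻¹ * |(i:ℝ) - (j:ℝ)| - β ≤ dist (q i) (q j) ∧
      dist (q i) (q j) ≤ α * |(i:ℝ) - (j:ℝ)| + β := by
    intro i j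
    have hd := hray (i:ℝ) (j:ℝ) (Nat.cast_nonneg i) (Nat.cast_nonneg j)
    have hb := hfb (γ (i:ℝ)) (γ (j:ℝ))
    rw [hd] at hb
    exact hb
  choose σ hσ using fun n => hYgeo (q 0) (q n)
  set L : ℕ → ℝ := fun n => dist (q 0) (q n) with hLdef
  have hL0 : ∀ n, 0 ≤ L n := fun n => dist_nonneg
  set i₀ : ℕ := ⌈t₀⌉₊ with hi₀
  have hyq : dist y (q i₀) ≤ ε + α * (M + 1) + β := by
    have h3 : dist x (γ (i₀:ℝ)) ≤ M + 1 := by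
      have h4 := hray t₀ (i₀:ℝ) ht₀ (Nat.cast_nonneg i₀)
      have h5 : |t₀ - (i₀:ℝ)| ≤ 1 := by
        have hle := Nat.le_ceil t₀
        have hlt := Nat.ceil_lt_add_one ht₀
        rw [abs_of_nonpos (by linarith)]
        linarith
      calc dist x (γ (i₀:ℝ)) ≤ dist x (γ t₀) + dist (γ t₀) (γ (i₀:ℝ)) := dist_triangle _ _ _
        _ ≤ M + 1 := by rw [h4]; linarith [hxt]
    have h2 := (hfb x (γ (i₀:ℝ))).2
    have h6 := mul_le_mul_of_nonneg_left h3 hαpos.le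
    calc dist y (q i₀) ≤ dist y (f x) + dist (f x) (q i₀) := dist_triangle _ _ _
      _ ≤ ε + (α * (M + 1) + β) := by
          rw [dist_comm y (f x)]
          have : dist (f x) (q i₀) = dist (f x) (f (γ (i₀:ℝ))) := rfl
          linarith [hx, h2, h6]
      _ = ε + α * (M + 1) + β := by ring
  have hnear' : ∀ n : ℕ, i₀ ≤ n → ∃ u ∈ Set.Icc (0:ℝ) (L n), dist y (σ n u) ≤ M'' := by
    intro n hn
    obtain ⟨u, huIcc, hqu⟩ := hnear n q (fun i j _ _ => hqb i j) (σ n) (hσ n) i₀ hn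
    refine ⟨u, huIcc, ?_⟩
    calc dist y (σ n u) ≤ dist y (q i₀) + dist (q i₀) (σ n u) := dist_triangle _ _ _
      _ ≤ (ε + α * (M + 1) + β) + D' := by linarith [hyq, hqu]
      _ = M'' := by rw [hM'']
  have hutot : ∀ n : ℕ, ∃ u, u ∈ Set.Icc (0:ℝ) (L n) ∧ (i₀ ≤ n → dist y (σ n u) ≤ M'') := by
    intro n
    rcases le_or_gt i₀ n with h | h
    · obtain ⟨u, h1, h2⟩ := hnear' n h; exact ⟨u, h1, fun _ => h2⟩
    · exact ⟨0, ⟨le_refl 0, hL0 n⟩, fun hc => absurd hc (by omega)⟩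
  choose uu huu1 huu2 using hutot
  obtain ⟨U, hU⟩ := Ultrafilter.exists_le (atTop : Filter ℕ)
  have hev : ∀ {p : ℕ → Prop}, (∀ᶠ n in atTop, p n) → ∀ᶠ n in U, p n := fun h => hU h
  have hLbig : ∀ cR : ℝ, ∀ᶠ n in atTop, cR ≤ L n := by
    intro cR
    have hcast : ∀ᶠ (n : ℕ) in atTop, α * (cR + β) ≤ (n:ℝ) :=
      tendsto_natCast_atTop_atTop.eventually_ge_atTop _
    filter_upwards [hcast] with n hn
    have h1 := (hqb 0 n).1
    have h2 : |((0:ℕ):ℝ) - (n:ℝ)| = (n:ℝ) := by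
      rw [Nat.cast_zero, zero_sub, abs_neg, abs_of_nonneg (Nat.cast_nonneg n)]
    rw [h2] at h1
    have h5 := mul_le_mul_of_nonneg_left hn (inv_nonneg.mpr hαpos.le)
    have h6 : α⁻¹ * (α * (cR + β)) = cR + β := by field_simp
    have h3 : cR ≤ α⁻¹ * (n:ℝ) - β := by rw [h6] at h5; linarith
    exact le_trans h3 h1
  have hσdist : ∀ n, ∀ s ∈ Set.Icc (0:ℝ) (L n), dist o (σ n s) = s := by
    intro n s hs
    have h := seg_dist_left (hσ n) hs
    rwa [hq0] at h
  have hΦex : ∀ t : ℝ, ∃ p : Y, 0 ≤ t → Filter.Tendsto (fun n => σ n (min t (L n))) U (nhds p) := by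
    intro t
    rcases le_or_gt 0 t with ht | ht
    · have hmem : ∀ n, σ n (min t (L n)) ∈ closedBall o t := by
        intro n
        have hIcc : min t (L n) ∈ Set.Icc (0:ℝ) (L n) := ⟨le_min ht (hL0 n), min_le_right _ _⟩
        rw [mem_closedBall, dist_comm, hσdist n _ hIcc]
        exact min_le_left _ _
      have hle : ↑(U.map (fun n => σ n (min t (L n)))) ≤ 𝓟 (closedBall o t) :=
        Filter.le_principal_iff.mpr (Filter.mem_map.mpr (Filter.Eventually.of_forall hmem))
      obtain ⟨p, _, hlim⟩ := (isCompact_closedBall o t).ultrafilter_le_nhds _ hle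
      rw [Ultrafilter.coe_map] at hlim
      exact ⟨p, fun _ => hlim⟩
    · exact ⟨o, fun hc => absurd hc (not_le.mpr ht)⟩
  choose Φ hΦ using hΦex
  have hΦ0 : Φ 0 = o := by
    have h1 : Filter.Tendsto (fun n => σ n (min 0 (L n))) U (nhds (Φ 0)) := hΦ 0 (le_refl 0)
    have h2 : (fun n => σ n (min 0 (L n))) = fun _ => o := by
      funext n
      have hm : min (0:ℝ) (L n) = 0 := min_eq_left (hL0 n)
      rw [hm, (hσ n).1, hq0]
    rw [h2] at h1
    exact tendsto_nhds_unique h1 tendsto_const_nhds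
  have hrayΦ : IsGeodesicRay Φ := by
    intro s t hs ht
    have h1 := (hΦ s hs).dist (hΦ t ht)
    have h2 : ∀ᶠ n in (U : Filter ℕ),
        dist (σ n (min s (L n))) (σ n (min t (L n))) = |s - t| := by
      apply hev
      filter_upwards [hLbig (max s t)] with n hn
      have hsn : min s (L n) = s := min_eq_left (le_trans (le_max_left s t) hn)
      have htn : min t (L n) = t := min_eq_left (le_trans (le_max_right s t) hn)
      rw [hsn, htn]
      exact (hσ n).2.2 s ⟨hs, le_trans (le_max_left s t) hn⟩
        t ⟨ht, le_trans (le_max_right s t) hn⟩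
    have h3 : Filter.Tendsto (fun n => dist (σ n (min s (L n))) (σ n (min t (L n)))) U
        (nhds |s - t|) := Filter.Tendsto.congr' (h2.mono fun n hn => hn.symm) tendsto_const_nhds
    exact tendsto_nhds_unique h1 h3
  set R : ℝ := dist o y + M'' with hR
  have hRmem : ∀ᶠ n in (U : Filter ℕ), uu n ∈ Set.Icc (0:ℝ) R := by
    apply hev
    filter_upwards [Filter.eventually_ge_atTop i₀] with n hn
    have h1 : dist o (σ n (uu n)) = uu n := hσdist n _ (huu1 n)
    have h2 := huu2 n hn
    refine ⟨(huu1 n).1, ?_⟩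
    calc uu n = dist o (σ n (uu n)) := h1.symm
      _ ≤ dist o y + dist y (σ n (uu n)) := dist_triangle _ _ _
      _ ≤ R := by rw [hR]; linarith
  have hRcomp : ↑(U.map uu) ≤ 𝓟 (Set.Icc (0:ℝ) R) :=
    Filter.le_principal_iff.mpr (Filter.mem_map.mpr hRmem)
  obtain ⟨ulim, hulimmem, hulim'⟩ := (isCompact_Icc).ultrafilter_le_nhds _ hRcomp
  have hulim : Filter.Tendsto uu U (nhds ulim) := by rwa [Ultrafilter.coe_map] at hulim'
  refine ⟨Φ, hrayΦ, hΦ0, ulim, hulimmem.1, ?_⟩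
  have h1 : Filter.Tendsto (fun n => dist y (σ n (min ulim (L n)))) U
      (nhds (dist y (Φ ulim))) := tendsto_const_nhds.dist (hΦ ulim hulimmem.1)
  have habs : Filter.Tendsto (fun n => |uu n - ulim|) U (nhds 0) := by
    have := (hulim.sub (tendsto_const_nhds : Filter.Tendsto (fun _ : ℕ => ulim) U (nhds ulim))).abs
    simpa using this
  have h2 : Filter.Tendsto (fun n => M'' + |uu n - ulim|) U (nhds (M'' + 0)) :=
    Filter.Tendsto.add tendsto_const_nhds habs
  have h3 : ∀ᶠ n in (U : Filter ℕ),
      dist y (σ n (min ulim (L n))) ≤ M'' + |uu n - ulim| := by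
    filter_upwards [hev (hLbig ulim), hev (Filter.eventually_ge_atTop i₀)] with n hLn hn
    have hmin : min ulim (L n) = ulim := min_eq_left hLn
    rw [hmin]
    have hd := (hσ n).2.2 (uu n) (huu1 n) ulim ⟨hulimmem.1, hLn⟩
    calc dist y (σ n ulim) ≤ dist y (σ n (uu n)) + dist (σ n (uu n)) (σ n ulim) :=
          dist_triangle _ _ _
      _ ≤ M'' + |uu n - ulim| := by rw [hd]; linarith [huu2 n hn]
  have h4 : dist y (Φ ulim) ≤ M'' + 0 := le_of_tendsto_of_tendsto h1 h2 h3
  linarith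
end
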